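/- arXiv:1902.05261 — 3 statements merged into one kernel-verified Lean document; each statement's English description precedes it below -/
import Mathlib

section
/- Let f_X be a probability density on ℝ satisfying c_X(1+|x|)^{-β-2} ≤ f_X(x) ≤ C_X(1+|x|)^{-β-2} for all x ∈ ℝ with constants C_X > c_X > 0 and β > 0. If Z = arctan(X) where X has density f_X, then the density f_Z of Z satisfies c_Z · | |z| - π/2 |^β ≤ f_Z(z) ≤ C_Z · | |z| - π/2 |^β for all z ∈ (-π/2, π/2), for some constants C_Z ≥ c_Z > 0. -/
open Real MeasureTheory

-- key lemma: pointwise bounds on (1+|tan z|)^(-β-2)/cos z^2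
lemma key (β : ℝ) (hβ : 0 < β) {z : ℝ} (hz : z ∈ Set.Ioo (-(π/2)) (π/2)) :
    (2/π) ^ β / 2 ^ (β+2) * |(|z| - π/2)| ^ β ≤ (1 + |Real.tan z|) ^ (-β - 2) / Real.cos z ^ 2 ∧
    (1 + |Real.tan z|) ^ (-β - 2) / Real.cos z ^ 2 ≤ |(|z| - π/2)| ^ β := by
  obtain ⟨hz1, hz2⟩ := hz
  have hw : |z| < π/2 := abs_lt.2 ⟨by linarith, hz2⟩
  set w := |z| with hwdef
  have hw0 : 0 ≤ w := abs_nonneg z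
  set u := π/2 - w with hudef
  have hu0 : 0 < u := by simp [hudef]; linarith
  have huπ : u ≤ π/2 := by simp [hudef]; linarith
  have habs : |(|z| - π/2)| = u := by
    rw [abs_of_neg (by linarith : |z| - π/2 < 0)]; ring_nf; linarith
  have hcw : Real.cos z = Real.cos w := (Real.cos_abs z).symm
  have hcwpos : 0 < Real.cos w := Real.cos_pos_of_mem_Ioo ⟨by linarith, hw⟩
  have hsw : 0 ≤ Real.sin w := Real.sin_nonneg_of_nonneg_of_le_pi hw0 (by linarith [pi_pos])
  have htan : |Real.tan z| = Real.sin w / Real.cos w := by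
    have h1 : |Real.tan z| = |Real.tan w| := by
      rcases abs_choice z with h | h
      · rw [hwdef, h]
      · rw [hwdef, h, Real.tan_neg, abs_neg]
    rw [h1, abs_of_nonneg (by rw [Real.tan_eq_sin_div_cos]; positivity),
      Real.tan_eq_sin_div_cos]
  set s := Real.cos w + Real.sin w with hsdef
  have hs1 : 1 ≤ s := by
    nlinarith [Real.sin_sq_add_cos_sq w, mul_nonneg hsw hcwpos.le]
  have hs2 : s ≤ 2 := by
    nlinarith [Real.sin_le_one w, Real.cos_le_one w]
  have h1t : 1 + |Real.tan z| = s / Real.cos w := by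
    rw [htan, hsdef]; field_simp
  have hA : (1 + |Real.tan z|) ^ (-β - 2) = Real.cos w ^ (β + 2) / s ^ (β + 2) := by
    rw [h1t, show (-β - 2 : ℝ) = -(β + 2) by ring,
      Real.rpow_neg (by positivity), ← Real.inv_rpow (by positivity), inv_div,
      Real.div_rpow hcwpos.le (by linarith)]
  have hcw2 : Real.cos w ^ (β + 2) = Real.cos w ^ β * Real.cos w ^ 2 := by
    rw [Real.rpow_add hcwpos, Real.rpow_two]
  have hmain : (1 + |Real.tan z|) ^ (-β - 2) / Real.cos z ^ 2
      = Real.cos w ^ β / s ^ (β + 2) := by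
    rw [hA, hcw, hcw2]
    field_simp
  have hsin : Real.cos w = Real.sin u := by rw [hudef, Real.sin_pi_div_two_sub]
  have hspos : (0:ℝ) < s ^ (β+2) := Real.rpow_pos_of_pos (by linarith) _
  constructor
  · -- lower bound
    rw [hmain, habs]
    have h1 : (2/π) * u ≤ Real.cos w := hsin ▸ Real.mul_le_sin hu0.le huπ
    have h2 : ((2/π) * u) ^ β ≤ Real.cos w ^ β :=
      Real.rpow_le_rpow (by positivity) h1 hβ.le
    have h3 : s ^ (β+2) ≤ (2:ℝ) ^ (β+2) :=
      Real.rpow_le_rpow (by linarith) hs2 (by linarith)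
    rw [Real.mul_rpow (by positivity) hu0.le] at h2
    calc (2/π) ^ β / 2 ^ (β+2) * u ^ β = (2/π) ^ β * u ^ β / 2 ^ (β+2) := by ring
    _ ≤ Real.cos w ^ β / 2 ^ (β+2) := by gcongr
    _ ≤ Real.cos w ^ β / s ^ (β+2) := by
        gcongr
  · -- upper bound
    rw [hmain, habs]
    have h1 : Real.cos w ^ β ≤ u ^ β := by
      apply Real.rpow_le_rpow hcwpos.le _ hβ.le
      rw [hsin]; exact Real.sin_le hu0.le
    have h2 : (1:ℝ) ≤ s ^ (β+2) := Real.one_le_rpow hs1 (by linarith)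
    calc Real.cos w ^ β / s ^ (β+2) ≤ Real.cos w ^ β / 1 := by
          gcongr
    _ = Real.cos w ^ β := div_one _
    _ ≤ u ^ β := h1

theorem stmt0 (fX : ℝ → ℝ) (cX CX β : ℝ) (hβ : 0 < β) (hc : 0 < cX) (hcC : cX < CX)
    (hbound : ∀ x : ℝ, cX * (1 + |x|) ^ (-β - 2) ≤ fX x ∧ fX x ≤ CX * (1 + |x|) ^ (-β - 2)) :
    ∃ cZ CZ : ℝ, 0 < cZ ∧ cZ ≤ CZ ∧ ∀ z ∈ Set.Ioo (-(π/2)) (π/2),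
      cZ * |(|z| - π/2)| ^ β ≤ fX (Real.tan z) / Real.cos z ^ 2 ∧
      fX (Real.tan z) / Real.cos z ^ 2 ≤ CZ * |(|z| - π/2)| ^ β := by
  have hπ := Real.pi_pos
  refine ⟨cX * ((2/π) ^ β / 2 ^ (β+2)), CX, by positivity, ?_, ?_⟩
  · have h1 : (2/π : ℝ) ^ β ≤ 1 :=
      Real.rpow_le_one (by positivity) (by rw [div_le_one hπ]; linarith [Real.two_le_pi]) hβ.le
    have h2 : (1:ℝ) ≤ 2 ^ (β+2) := Real.one_le_rpow one_le_two (by linarith)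
    have : (2/π : ℝ) ^ β / 2 ^ (β+2) ≤ 1 := by
      calc (2/π : ℝ) ^ β / 2 ^ (β+2) ≤ 1 / 1 := by
            gcongr
      _ = 1 := div_one 1
    nlinarith [Real.rpow_nonneg (show (0:ℝ) ≤ 2/π by positivity) β,
      Real.rpow_pos_of_pos (show (0:ℝ) < 2 by norm_num) (β+2)]
  · intro z hz
    obtain ⟨hlo, hhi⟩ := key β hβ hz
    obtain ⟨hb1, hb2⟩ := hbound (Real.tan z)
    have hcos : 0 < Real.cos z := Real.cos_pos_of_mem_Ioo hz
    have hcos2 : 0 < Real.cos z ^ 2 := by positivity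
    constructor
    · calc cX * ((2/π) ^ β / 2 ^ (β+2)) * |(|z| - π/2)| ^ β
          = cX * ((2/π) ^ β / 2 ^ (β+2) * |(|z| - π/2)| ^ β) := by ring
      _ ≤ cX * ((1 + |Real.tan z|) ^ (-β - 2) / Real.cos z ^ 2) := by gcongr
      _ = cX * (1 + |Real.tan z|) ^ (-β - 2) / Real.cos z ^ 2 := by ring
      _ ≤ fX (Real.tan z) / Real.cos z ^ 2 := by gcongr
    · calc fX (Real.tan z) / Real.cos z ^ 2
          ≤ CX * (1 + |Real.tan z|) ^ (-β - 2) / Real.cos z ^ 2 := by gcongr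
      _ = CX * ((1 + |Real.tan z|) ^ (-β - 2) / Real.cos z ^ 2) := by ring
      _ ≤ CX * |(|z| - π/2)| ^ β := by
          gcongr
          linarith
end

section
/- Let g(y) = ∫_ℝ f₀(α(y - a₁ X), β a₁) da₁ where f₀(u,v) = 1/(π²(1+u²)(1+v²)), α, β > 0 and X ∈ ℝ. Then αβ g(y) ≥ (1/(2π²)) · α/(1 + 2α²y² + 2X²α²/β²) for all y ∈ ℝ. -/
open Real MeasureTheory

set_option maxHeartbeats 1000000 in
theorem stmt8 (α β X y : ℝ) (hα : 0 < α) (hβ : 0 < β) :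
    (1/(2*π^2)) * (α / (1 + 2*α^2*y^2 + 2*X^2*α^2/β^2))
      ≤ α * β * ∫ a1 : ℝ, 1/(π^2 * (1 + (α*(y - a1*X))^2) * (1 + (β*a1)^2)) := by
  have hπ : (0:ℝ) < π := Real.pi_pos
  set f : ℝ → ℝ := fun a1 => 1/(π^2 * (1 + (α*(y - a1*X))^2) * (1 + (β*a1)^2)) with hf
  have hD : (0:ℝ) < 1 + 2*α^2*y^2 + 2*X^2*α^2/β^2 := by positivity
  set D : ℝ := 1 + 2*α^2*y^2 + 2*X^2*α^2/β^2 with hDdef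
  have hfpos : ∀ a1 : ℝ, 0 < f a1 := by intro a1; simp only [hf]; positivity
  have hcont : Continuous f := by
    apply Continuous.div continuous_const (by continuity)
    intro x; positivity
  -- integrability
  have hmaj : Integrable (fun a1 : ℝ => (1/π^2) * (1 + (β*a1)^2)⁻¹) := by
    have h0 : Integrable (fun x : ℝ => (1 + x^2)⁻¹) := integrable_inv_one_add_sq
    have h1 : Integrable (fun a1 : ℝ => (1 + (β*a1)^2)⁻¹) :=
      h0.comp_mul_left' (ne_of_gt hβ)
    exact h1.const_mul _
  have hInt : Integrable f := by
    refine Integrable.mono' hmaj hcont.aestronglyMeasurable (Filter.Eventually.of_forall ?_)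
    intro a1
    rw [Real.norm_eq_abs, abs_of_pos (hfpos a1)]
    simp only [hf]
    rw [one_div, mul_inv]
    have h1 : (π^2 * (1 + (α*(y - a1*X))^2))⁻¹ ≤ (π^2)⁻¹ := by
      apply inv_anti₀ (by positivity)
      nlinarith [sq_nonneg (α*(y - a1*X)), sq_nonneg π]
    have h2 : (0:ℝ) < (1 + (β*a1)^2)⁻¹ := by positivity
    calc (π^2 * (1 + (α*(y - a1*X))^2))⁻¹ * (1 + (β*a1)^2)⁻¹
        ≤ (π^2)⁻¹ * (1 + (β*a1)^2)⁻¹ := by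
          exact mul_le_mul_of_nonneg_right h1 (le_of_lt h2)
      _ = 1/π^2 * (1 + (β*a1)^2)⁻¹ := by rw [one_div]
  -- lower bound on [0, 1/β]
  set c : ℝ := 1/(2*π^2*D) with hc
  have hlow : ∀ a1 ∈ Set.Icc (0:ℝ) (1/β), c ≤ f a1 := by
    intro a1 ha1
    obtain ⟨h0, h1⟩ := ha1
    have ha2 : a1^2 ≤ 1/β^2 := by
      have := sq_le_sq' (by linarith [one_div_pos.mpr hβ] : -(1/β) ≤ a1) h1
      calc a1^2 ≤ (1/β)^2 := this
        _ = 1/β^2 := by rw [div_pow, one_pow]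
    have hu : (α*(y - a1*X))^2 ≤ 2*α^2*y^2 + 2*X^2*α^2/β^2 := by
      have h2 : (y - a1*X)^2 ≤ 2*y^2 + 2*a1^2*X^2 := by nlinarith [sq_nonneg (y + a1*X)]
      have h3 : a1^2 * X^2 ≤ X^2/β^2 := by
        rw [div_eq_mul_inv, ← one_div]
        nlinarith [sq_nonneg X]
      calc (α*(y - a1*X))^2 = α^2 * (y - a1*X)^2 := by ring
        _ ≤ α^2 * (2*y^2 + 2*a1^2*X^2) := mul_le_mul_of_nonneg_left h2 (sq_nonneg α)
        _ = 2*α^2*y^2 + 2*(α^2*(a1^2*X^2)) := by ring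
        _ ≤ 2*α^2*y^2 + 2*(α^2*(X^2/β^2)) := by
            have h4 := mul_le_mul_of_nonneg_left h3 (sq_nonneg α)
            linarith
        _ = 2*α^2*y^2 + 2*X^2*α^2/β^2 := by ring
    have hv : (β*a1)^2 ≤ 1 := by
      have : β * a1 ≤ 1 := by
        calc β * a1 ≤ β * (1/β) := by
              exact mul_le_mul_of_nonneg_left h1 (le_of_lt hβ)
          _ = 1 := by field_simp
      have hnn : 0 ≤ β * a1 := mul_nonneg (le_of_lt hβ) h0
      calc (β*a1)^2 = (β*a1)*(β*a1) := by ring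
        _ ≤ 1*1 := mul_le_mul this this hnn zero_le_one
        _ = 1 := one_mul 1
    simp only [hf, hc]
    refine one_div_le_one_div_of_le (by positivity) ?_
    have hA : 1 + (α*(y - a1*X))^2 ≤ D := by simp only [hDdef]; linarith
    have hB : 1 + (β*a1)^2 ≤ 2 := by linarith
    have hstep1 : π^2 * (1 + (α*(y - a1*X))^2) ≤ π^2 * D :=
      mul_le_mul_of_nonneg_left hA (sq_nonneg π)
    calc π^2 * (1 + (α*(y - a1*X))^2) * (1 + (β*a1)^2)
        ≤ π^2 * D * 2 :=
          mul_le_mul hstep1 hB (by positivity) (by positivity)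
      _ = 2*π^2*D := by ring
  have hmeas : MeasurableSet (Set.Icc (0:ℝ) (1/β)) := measurableSet_Icc
  have hvol : (volume (Set.Icc (0:ℝ) (1/β))).toReal = 1/β := by
    rw [Real.volume_Icc, sub_zero, ENNReal.toReal_ofReal (by positivity : (0:ℝ) ≤ 1/β)]
  have hset : c * (1/β) ≤ ∫ a1 in Set.Icc (0:ℝ) (1/β), f a1 := by
    have := setIntegral_ge_of_const_le_real hmeas (by rw [Real.volume_Icc]; exact ENNReal.ofReal_ne_top)
      hlow (hInt.integrableOn)
    rwa [measureReal_def, hvol] at this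
  have hfull : ∫ a1 in Set.Icc (0:ℝ) (1/β), f a1 ≤ ∫ a1, f a1 :=
    setIntegral_le_integral hInt (Filter.Eventually.of_forall fun a1 => (hfpos a1).le)
  have hmain : c * (1/β) ≤ ∫ a1, f a1 := le_trans hset hfull
  have heq : (1/(2*π^2)) * (α / D) = α * β * (c * (1/β)) := by
    simp only [hc]
    field_simp
  rw [heq]
  apply mul_le_mul_of_nonneg_left hmain (by positivity)
end

section
/- Let Z₁,…,Z_n be i.i.d. with density f_Z on (-π/2,π/2) satisfying f_Z(z) ≥ c_Z||z|-π/2|^β with β > 0, c_Z > 0. Define L_n(δ) = min{Z_j : Z_j ≥ -π/2 + δ} if such Z_j exists, and L_n(δ) = -π/2 otherwise. Then for 0 < δ ≤ π/4, E[(L_n(δ) + π/2)²] ≤ 2(δ + 1/(c_Z n δ^β))² + π² exp(-c_Z n (π/2 - δ) δ^β). -/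
open Real MeasureTheory

/-- The leftmost observation at or above the cutoff `-π/2 + δ`, or `-π/2` if there is none. -/
noncomputable def leftMost (n : ℕ) (δ : ℝ) (ω : Fin n → ℝ) : ℝ :=
  if h : (Finset.univ.filter fun j => -(π/2) + δ ≤ ω j).Nonempty then
    (Finset.univ.filter fun j => -(π/2) + δ ≤ ω j).inf' h ω
  else -(π/2)

lemma meas_inf' {ι α : Type*} [MeasurableSpace α] (s : Finset ι)
    (hs : s.Nonempty) (f : ι → α → ℝ) (hf : ∀ i, Measurable (f i)) :
    Measurable fun ω => s.inf' hs fun i => f i ω := by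
  induction hs using Finset.Nonempty.cons_induction with
  | singleton i => simp only [Finset.inf'_singleton]; exact hf i
  | cons i s hi hs ih => simp only [Finset.inf'_cons hs]; exact (hf i).inf ih

lemma meas_sup' {ι α : Type*} [MeasurableSpace α] (s : Finset ι)
    (hs : s.Nonempty) (f : ι → α → ℝ) (hf : ∀ i, Measurable (f i)) :
    Measurable fun ω => s.sup' hs fun i => f i ω := by
  induction hs using Finset.Nonempty.cons_induction with
  | singleton i => simp only [Finset.sup'_singleton]; exact hf i
  | cons i s hi hs ih => simp only [Finset.sup'_cons hs]; exact (hf i).sup ih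

lemma measurable_leftMost (n : ℕ) (hn : 1 ≤ n) (δ : ℝ) : Measurable (leftMost n δ) := by
  classical
  have hne : (Finset.univ : Finset (Fin n)).Nonempty := ⟨⟨0, hn⟩, Finset.mem_univ _⟩
  have key : leftMost n δ = fun ω =>
      if ∃ j, -(π/2) + δ ≤ ω j then
        Finset.univ.inf' hne (fun j => if -(π/2) + δ ≤ ω j then ω j else Finset.univ.sup' hne ω)
      else -(π/2) := by
    funext ω
    by_cases h : (Finset.univ.filter fun j => -(π/2) + δ ≤ ω j).Nonempty
    · have hex : ∃ j, -(π/2) + δ ≤ ω j := by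
        obtain ⟨j, hj⟩ := h
        exact ⟨j, (Finset.mem_filter.mp hj).2⟩
      rw [leftMost, dif_pos h, if_pos hex]
      apply le_antisymm
      · apply Finset.le_inf'
        intro j _
        by_cases hj : -(π/2) + δ ≤ ω j
        · rw [if_pos hj]
          exact Finset.inf'_le ω (Finset.mem_filter.mpr ⟨Finset.mem_univ j, hj⟩)
        · rw [if_neg hj]
          obtain ⟨j₀, hj₀⟩ := h
          exact le_trans (Finset.inf'_le _ hj₀) (Finset.le_sup' _ (Finset.mem_univ j₀))
      · apply Finset.le_inf'
        intro j hj
        have hj' := (Finset.mem_filter.mp hj).2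
        calc Finset.univ.inf' hne (fun j => if -(π/2) + δ ≤ ω j then ω j else Finset.univ.sup' hne ω)
            ≤ _ := Finset.inf'_le _ (Finset.mem_univ j)
          _ = ω j := if_pos hj'
    · have hex : ¬ ∃ j, -(π/2) + δ ≤ ω j := by
        rintro ⟨j, hj⟩
        exact h ⟨j, Finset.mem_filter.mpr ⟨Finset.mem_univ _, hj⟩⟩
      rw [leftMost, dif_neg h, if_neg hex]
  rw [key]
  refine Measurable.ite ?_ ?_ measurable_const
  · have : {ω : Fin n → ℝ | ∃ j, -(π/2) + δ ≤ ω j}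
        = ⋃ j, (fun ω : Fin n → ℝ => ω j) ⁻¹' Set.Ici (-(π/2) + δ) := by
      ext ω; simp [Set.mem_iUnion]
    rw [this]
    exact MeasurableSet.iUnion fun j => (measurable_pi_apply j) measurableSet_Ici
  · apply meas_inf'
    intro i
    exact Measurable.ite ((measurable_pi_apply i) measurableSet_Ici) (measurable_pi_apply i)
      (meas_sup' _ hne _ fun j => measurable_pi_apply j)

lemma tail_bound (n : ℕ) (fZ : ℝ → ℝ) (cZ β δ : ℝ)
    (hcZ : 0 < cZ) (hβ : 0 < β) (hδ : 0 < δ)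
    (μ : Measure ℝ) (hμ : μ = volume.withDensity (fun z => ENNReal.ofReal (fZ z)))
    (hprob : IsProbabilityMeasure μ)
    (hlow : ∀ z ∈ Set.Ioo (-(π/2)) (π/2), cZ * |(|z| - π/2)| ^ β ≤ fZ z)
    (t : ℝ) (ht : δ ≤ t) (ht' : t ≤ π/2) :
    (Measure.pi fun _ : Fin n => μ) {ω | t < leftMost n δ ω + π/2}
      ≤ ENNReal.ofReal (Real.exp (-(cZ * n * δ ^ β * (t - δ)))) := by
  haveI := hprob
  set I := Set.Icc (-(π/2) + δ) (t - π/2) with hI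
  set a := cZ * δ ^ β * (t - δ) with ha
  have ha0 : 0 ≤ a := by
    apply mul_nonneg (mul_nonneg hcZ.le (Real.rpow_nonneg hδ.le β))
    linarith
  -- step 1 : inclusion
  have hsub : {ω : Fin n → ℝ | t < leftMost n δ ω + π/2}
      ⊆ Set.pi Set.univ fun _ : Fin n => Iᶜ := by
    intro ω hω j _
    simp only [Set.mem_compl_iff]
    intro hj
    have hfil : j ∈ Finset.univ.filter fun j => -(π/2) + δ ≤ ω j :=
      Finset.mem_filter.mpr ⟨Finset.mem_univ j, hj.1⟩
    have hne : (Finset.univ.filter fun j => -(π/2) + δ ≤ ω j).Nonempty := ⟨j, hfil⟩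
    have hle : leftMost n δ ω ≤ ω j := by
      rw [leftMost, dif_pos hne]
      exact Finset.inf'_le ω hfil
    have : t < leftMost n δ ω + π/2 := hω
    have hj2 : ω j ≤ t - π/2 := hj.2
    linarith
  -- step 3 : lower bound on μ I
  have hμI : ENNReal.ofReal a ≤ μ I := by
    rw [hμ, withDensity_apply _ measurableSet_Icc]
    have hptwise : ∀ x ∈ I, ENNReal.ofReal (cZ * δ ^ β) ≤ ENNReal.ofReal (fZ x) := by
      intro x hx
      obtain ⟨hx1, hx2⟩ := hx
      have hx0 : x ≤ 0 := by linarith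
      have hxIoo : x ∈ Set.Ioo (-(π/2)) (π/2) := by
        constructor <;> [linarith; linarith [pi_pos]]
      have habs : |(|x| - π/2)| = x + π/2 := by
        rw [abs_of_nonpos hx0]
        rw [abs_of_nonpos (by linarith [pi_pos] : -x - π/2 ≤ 0)]
        ring
      have hpow : δ ^ β ≤ |(|x| - π/2)| ^ β := by
        rw [habs]
        exact Real.rpow_le_rpow hδ.le (by linarith) hβ.le
      have := hlow x hxIoo
      apply ENNReal.ofReal_le_ofReal
      calc cZ * δ ^ β ≤ cZ * |(|x| - π/2)| ^ β := by
            exact mul_le_mul_of_nonneg_left hpow hcZ.le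
        _ ≤ fZ x := this
    calc ENNReal.ofReal a = ENNReal.ofReal (cZ * δ ^ β) * ENNReal.ofReal (t - δ) := by
          rw [← ENNReal.ofReal_mul (mul_nonneg hcZ.le (Real.rpow_nonneg hδ.le β))]
      _ = ENNReal.ofReal (cZ * δ ^ β) * volume I := by
          rw [hI, Real.volume_Icc]
          congr 2
          ring
      _ = ∫⁻ _ in I, ENNReal.ofReal (cZ * δ ^ β) := by rw [setLIntegral_const]
      _ ≤ ∫⁻ x in I, ENNReal.ofReal (fZ x) := setLIntegral_mono' measurableSet_Icc hptwise
  -- step 2+4+5+6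
  calc (Measure.pi fun _ : Fin n => μ) {ω | t < leftMost n δ ω + π/2}
      ≤ (Measure.pi fun _ : Fin n => μ) (Set.pi Set.univ fun _ : Fin n => Iᶜ) :=
        measure_mono hsub
    _ = ∏ _j : Fin n, μ Iᶜ := Measure.pi_pi _ _
    _ = (μ Iᶜ) ^ n := by rw [Finset.prod_const, Finset.card_univ, Fintype.card_fin]
    _ ≤ (ENNReal.ofReal (Real.exp (-a))) ^ n := by
        apply pow_le_pow_left'
        rw [prob_compl_eq_one_sub measurableSet_Icc]
        calc 1 - μ I ≤ 1 - ENNReal.ofReal a := tsub_le_tsub_left hμI 1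
          _ = ENNReal.ofReal (1 - a) := by
              rw [ENNReal.ofReal_sub 1 ha0, ENNReal.ofReal_one]
          _ ≤ ENNReal.ofReal (Real.exp (-a)) := by
              apply ENNReal.ofReal_le_ofReal
              linarith [Real.add_one_le_exp (-a)]
    _ = ENNReal.ofReal (Real.exp (-a) ^ n) := by
        rw [ENNReal.ofReal_pow (Real.exp_nonneg _)]
    _ = ENNReal.ofReal (Real.exp (-(cZ * n * δ ^ β * (t - δ)))) := by
        rw [← Real.exp_nat_mul]
        congr 1
        rw [ha]; ring

set_option maxHeartbeats 1000000 in
theorem stmt12 (n : ℕ) (hn : 1 ≤ n) (fZ : ℝ → ℝ) (cZ β δ : ℝ)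
    (hcZ : 0 < cZ) (hβ : 0 < β) (hδ : 0 < δ) (hδ' : δ ≤ π/4)
    (μ : Measure ℝ) (hμ : μ = volume.withDensity (fun z => ENNReal.ofReal (fZ z)))
    (hprob : IsProbabilityMeasure μ)
    (hsupp : ∀ z : ℝ, z ∉ Set.Ioo (-(π/2)) (π/2) → fZ z = 0)
    (hlow : ∀ z ∈ Set.Ioo (-(π/2)) (π/2), cZ * |(|z| - π/2)| ^ β ≤ fZ z) :
    (∫ ω : Fin n → ℝ, (leftMost n δ ω + π/2)^2 ∂(Measure.pi fun _ : Fin n => μ))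
      ≤ 2 * (δ + 1/(cZ * n * δ ^ β))^2
        + π^2 * Real.exp (-(cZ * n * (π/2 - δ) * δ ^ β)) := by
  classical
  haveI := hprob
  have hπ2 : (0:ℝ) < π/2 := by linarith [pi_pos]
  have hδ2 : δ < π/2 := by linarith [pi_pos]
  set ν := Measure.pi fun _ : Fin n => μ with hν
  haveI : IsProbabilityMeasure ν := by rw [hν]; infer_instance
  set c := cZ * (n:ℝ) * δ ^ β with hc
  have hn0 : (0:ℝ) < n := by exact_mod_cast hn
  have hc0 : 0 < c := mul_pos (mul_pos hcZ hn0) (Real.rpow_pos_of_pos hδ β)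
  set W := fun ω : Fin n → ℝ => leftMost n δ ω + π/2 with hWdef
  have hW0 : ∀ ω, 0 ≤ W ω := by
    intro ω
    show 0 ≤ leftMost n δ ω + π/2
    rw [leftMost]
    split_ifs with h
    · have : -(π/2) + δ ≤ (Finset.univ.filter fun j => -(π/2) + δ ≤ ω j).inf' h ω := by
        apply Finset.le_inf'
        intro j hj
        exact (Finset.mem_filter.mp hj).2
      linarith
    · linarith
  have hWm : Measurable W := (measurable_leftMost n hn δ).add_const _
  -- null sets above π/2
  have hμIoi : μ (Set.Ioi (π/2)) = 0 := by
    rw [hμ, withDensity_apply _ measurableSet_Ioi]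
    have hle : ∫⁻ x in Set.Ioi (π/2), ENNReal.ofReal (fZ x)
        ≤ ∫⁻ _ in Set.Ioi (π/2), 0 := by
      apply setLIntegral_mono' measurableSet_Ioi
      intro x hx
      rw [hsupp x (fun hmem => absurd hmem.2 (not_lt.mpr (le_of_lt hx)))]
      simp
    simpa using hle
  have hπnull : ν (⋃ j : Fin n, (fun ω : Fin n → ℝ => ω j) ⁻¹' Set.Ioi (π/2)) = 0 :=
    measure_iUnion_null fun j => Measure.pi_eval_preimage_null _ hμIoi
  have hπ : ∀ t : ℝ, π < t → ν {ω | t < W ω} = 0 := by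
    intro t htπ
    apply measure_mono_null _ hπnull
    intro ω hω
    have hω' : t < leftMost n δ ω + π/2 := hω
    rw [leftMost] at hω'
    split_ifs at hω' with h
    · obtain ⟨j, hj, heq⟩ := Finset.exists_mem_eq_inf' h ω
      refine Set.mem_iUnion.mpr ⟨j, ?_⟩
      simp only [Set.mem_preimage, Set.mem_Ioi]
      rw [heq] at hω'
      linarith
    · linarith [pi_pos]
  have htail : ∀ t : ℝ, δ ≤ t → t ≤ π/2 →
      ν {ω | t < W ω} ≤ ENNReal.ofReal (Real.exp (-(c * (t - δ)))) := by
    intro t h1 h2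
    have := tail_bound n fZ cZ β δ hcZ hβ hδ μ hμ hprob hlow t h1 h2
    rw [hν]
    exact this
  set E := Real.exp (-(c * (π/2 - δ))) with hE
  have hE0 : 0 ≤ E := Real.exp_nonneg _
  -- integral to lintegral
  have hint : (∫ ω, (leftMost n δ ω + π/2)^2 ∂ν)
      = (∫⁻ ω, ENNReal.ofReal ((W ω)^2) ∂ν).toReal := by
    rw [integral_eq_lintegral_of_nonneg_ae (Filter.Eventually.of_forall fun ω => sq_nonneg _)
      ((hWm.pow_const 2).aestronglyMeasurable)]
  -- layer cake
  have hlc : ∫⁻ ω, ENNReal.ofReal ((W ω)^2) ∂ν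
      = ∫⁻ t in Set.Ioi 0, ν {ω | t < W ω} * ENNReal.ofReal (2*t) := by
    have key := lintegral_comp_eq_lintegral_meas_lt_mul ν (f := W) (g := fun t => 2*t)
      (Filter.Eventually.of_forall hW0) hWm.aemeasurable
      (fun t _ => (continuous_const.mul continuous_id).intervalIntegrable 0 t)
      ((ae_restrict_iff' measurableSet_Ioi).mpr
        (Filter.Eventually.of_forall fun t ht => by
          simp only [Set.mem_Ioi] at ht
          show (0:ℝ) ≤ 2 * t
          linarith))
    rw [← key]
    apply lintegral_congr
    intro ω
    congr 1
    rw [intervalIntegral.integral_const_mul, integral_id]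
    ring
  -- piece 1
  have hF1 : ∫⁻ t in Set.Ioc 0 δ, ν {ω | t < W ω} * ENNReal.ofReal (2*t)
      ≤ ENNReal.ofReal (δ^2) := by
    calc ∫⁻ t in Set.Ioc 0 δ, ν {ω | t < W ω} * ENNReal.ofReal (2*t)
        ≤ ∫⁻ t in Set.Ioc 0 δ, ENNReal.ofReal (2*t) := by
          apply lintegral_mono
          intro t
          calc ν {ω | t < W ω} * ENNReal.ofReal (2*t)
              ≤ 1 * ENNReal.ofReal (2*t) := mul_le_mul_left prob_le_one _
            _ = ENNReal.ofReal (2*t) := one_mul _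
      _ = ENNReal.ofReal (∫ t in Set.Ioc 0 δ, 2*t) := by
          rw [← ofReal_integral_eq_lintegral_ofReal]
          · exact (continuous_const.mul continuous_id).integrableOn_Ioc
          · exact (ae_restrict_iff' measurableSet_Ioc).mpr
              (Filter.Eventually.of_forall fun t ht => by
                have h1 := ht.1
                show (0:ℝ) ≤ 2 * t
                linarith)
      _ = ENNReal.ofReal (δ^2) := by
          rw [← intervalIntegral.integral_of_le hδ.le, intervalIntegral.integral_const_mul,
            integral_id]
          congr 1
          ring
  -- piece 2
  have hmid : ∫⁻ t in Set.Ioc δ (π/2), ν {ω | t < W ω} * ENNReal.ofReal (2*t)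
      ≤ ENNReal.ofReal (2*δ/c + 2/c^2) := by
    have hcont : Continuous fun t : ℝ => 2*t*Real.exp (-(c*(t-δ))) := by
      apply Continuous.mul (continuous_const.mul continuous_id)
      exact Real.continuous_exp.comp ((continuous_const.mul (continuous_id.sub continuous_const)).neg)
    calc ∫⁻ t in Set.Ioc δ (π/2), ν {ω | t < W ω} * ENNReal.ofReal (2*t)
        ≤ ∫⁻ t in Set.Ioc δ (π/2), ENNReal.ofReal (2*t*Real.exp (-(c*(t-δ)))) := by
          apply setLIntegral_mono' measurableSet_Ioc
          intro t ht
          calc ν {ω | t < W ω} * ENNReal.ofReal (2*t)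
              ≤ ENNReal.ofReal (Real.exp (-(c*(t-δ)))) * ENNReal.ofReal (2*t) :=
                mul_le_mul_left (htail t ht.1.le ht.2) _
            _ = ENNReal.ofReal (2*t*Real.exp (-(c*(t-δ)))) := by
                rw [← ENNReal.ofReal_mul (Real.exp_nonneg _)]
                congr 1
                ring
      _ = ENNReal.ofReal (∫ t in Set.Ioc δ (π/2), 2*t*Real.exp (-(c*(t-δ)))) := by
          rw [← ofReal_integral_eq_lintegral_ofReal]
          · exact hcont.integrableOn_Ioc
          · exact (ae_restrict_iff' measurableSet_Ioc).mpr
              (Filter.Eventually.of_forall fun t ht => by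
                have h1 := ht.1
                show (0:ℝ) ≤ 2 * t * Real.exp (-(c*(t-δ)))
                have h2 : (0:ℝ) ≤ 2*t := by linarith
                exact mul_nonneg h2 (Real.exp_nonneg _))
      _ ≤ ENNReal.ofReal (2*δ/c + 2/c^2) := by
          apply ENNReal.ofReal_le_ofReal
          have hderiv : ∀ t ∈ Set.uIcc δ (π/2),
              HasDerivAt (fun t => -(2/c*t + 2/c^2) * Real.exp (-(c*(t-δ))))
                (2*t*Real.exp (-(c*(t-δ)))) t := by
            intro t _
            have h1 : HasDerivAt (fun t : ℝ => -(2/c*t + 2/c^2)) (-(2/c)) t := by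
              have h := (((hasDerivAt_id t).const_mul (2/c)).add_const (2/c^2)).neg
              simp only [mul_one] at h
              exact h
            have h2 : HasDerivAt (fun t : ℝ => Real.exp (-(c*(t-δ))))
                (Real.exp (-(c*(t-δ))) * (-c)) t := by
              have hlin : HasDerivAt (fun t : ℝ => -(c*(t-δ))) (-c) t := by
                have h := (((hasDerivAt_id t).sub_const δ).const_mul c).neg
                simp only [mul_one] at h
                exact h
              exact hlin.exp
            have hm := h1.mul h2
            refine hm.congr_deriv ?_
            field_simp
            ring
          have hFTC := intervalIntegral.integral_eq_sub_of_hasDerivAt hderiv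
            (hcont.intervalIntegrable _ _)
          rw [← intervalIntegral.integral_of_le hδ2.le, hFTC]
          have hq : 0 ≤ (2/c*(π/2) + 2/c^2) * Real.exp (-(c*(π/2-δ))) := by
            apply mul_nonneg _ (Real.exp_nonneg _)
            positivity
          have hr : 2/c*δ = 2*δ/c := by ring
          simp only [sub_self, mul_zero, neg_zero, Real.exp_zero, mul_one, neg_mul]
          linarith
  -- piece 3
  have hhi : ∫⁻ t in Set.Ioc (π/2) π, ν {ω | t < W ω} * ENNReal.ofReal (2*t)
      ≤ ENNReal.ofReal (3/4*π^2*E) := by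
    have htail2 : ∀ t ∈ Set.Ioc (π/2) π, ν {ω | t < W ω} ≤ ENNReal.ofReal E := by
      intro t ht
      calc ν {ω | t < W ω} ≤ ν {ω | π/2 < W ω} :=
            measure_mono (fun ω hω => lt_trans ht.1 hω)
        _ ≤ ENNReal.ofReal E := htail (π/2) (by linarith) le_rfl
    calc ∫⁻ t in Set.Ioc (π/2) π, ν {ω | t < W ω} * ENNReal.ofReal (2*t)
        ≤ ∫⁻ t in Set.Ioc (π/2) π, ENNReal.ofReal (2*t*E) := by
          apply setLIntegral_mono' measurableSet_Ioc
          intro t ht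
          calc ν {ω | t < W ω} * ENNReal.ofReal (2*t)
              ≤ ENNReal.ofReal E * ENNReal.ofReal (2*t) :=
                mul_le_mul_left (htail2 t ht) _
            _ = ENNReal.ofReal (2*t*E) := by
                rw [← ENNReal.ofReal_mul hE0]
                congr 1
                ring
      _ = ENNReal.ofReal (∫ t in Set.Ioc (π/2) π, 2*t*E) := by
          rw [← ofReal_integral_eq_lintegral_ofReal]
          · exact ((continuous_const.mul continuous_id).mul continuous_const).integrableOn_Ioc
          · exact (ae_restrict_iff' measurableSet_Ioc).mpr
              (Filter.Eventually.of_forall fun t ht => by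
                have h1 := ht.1
                show (0:ℝ) ≤ 2 * t * E
                have h2 : (0:ℝ) ≤ 2*t := by linarith
                exact mul_nonneg h2 hE0)
      _ ≤ ENNReal.ofReal (3/4*π^2*E) := by
          apply ENNReal.ofReal_le_ofReal
          rw [← intervalIntegral.integral_of_le (by linarith [pi_pos] : π/2 ≤ π)]
          have : ∫ t in (π/2)..π, 2*t*E = (π^2 - (π/2)^2) * E := by
            rw [intervalIntegral.integral_mul_const, intervalIntegral.integral_const_mul,
              integral_id]
            ring
          rw [this]
          nlinarith [hE0]
  -- piece 4
  have hzero : ∫⁻ t in Set.Ioi π, ν {ω | t < W ω} * ENNReal.ofReal (2*t) = 0 := by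
    apply le_antisymm _ zero_le
    calc ∫⁻ t in Set.Ioi π, ν {ω | t < W ω} * ENNReal.ofReal (2*t)
        ≤ ∫⁻ _ in Set.Ioi π, 0 := by
          apply setLIntegral_mono' measurableSet_Ioi
          intro t ht
          rw [hπ t ht, zero_mul]
      _ = 0 := by simp
  -- decomposition
  have hdecomp : ∫⁻ t in Set.Ioi 0, ν {ω | t < W ω} * ENNReal.ofReal (2*t)
      ≤ ENNReal.ofReal (δ^2) + ENNReal.ofReal (2*δ/c + 2/c^2)
        + ENNReal.ofReal (3/4*π^2*E) := by
    have e1 : Set.Ioi (0:ℝ) = Set.Ioc 0 π ∪ Set.Ioi π :=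
      (Set.Ioc_union_Ioi_eq_Ioi (by linarith [pi_pos])).symm
    have e2 : Set.Ioc (0:ℝ) π = Set.Ioc 0 (π/2) ∪ Set.Ioc (π/2) π :=
      (Set.Ioc_union_Ioc_eq_Ioc hπ2.le (by linarith [pi_pos])).symm
    have e3 : Set.Ioc (0:ℝ) (π/2) = Set.Ioc 0 δ ∪ Set.Ioc δ (π/2) :=
      (Set.Ioc_union_Ioc_eq_Ioc hδ.le hδ2.le).symm
    rw [e1, lintegral_union measurableSet_Ioi Set.Ioc_disjoint_Ioi_same, hzero, add_zero,
      e2, lintegral_union measurableSet_Ioc (Set.Ioc_disjoint_Ioc_of_le le_rfl),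
      e3, lintegral_union measurableSet_Ioc (Set.Ioc_disjoint_Ioc_of_le le_rfl)]
    exact add_le_add (add_le_add hF1 hmid) hhi
  -- total
  have hsum : ENNReal.ofReal (δ^2) + ENNReal.ofReal (2*δ/c + 2/c^2)
      + ENNReal.ofReal (3/4*π^2*E)
      = ENNReal.ofReal (δ^2 + (2*δ/c + 2/c^2) + 3/4*π^2*E) := by
    rw [← ENNReal.ofReal_add (by positivity) (by positivity),
      ← ENNReal.ofReal_add (by positivity) (by positivity)]
  have hfinal : (∫ ω, (leftMost n δ ω + π/2)^2 ∂ν)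
      ≤ δ^2 + (2*δ/c + 2/c^2) + 3/4*π^2*E := by
    rw [hint, hlc]
    calc (∫⁻ t in Set.Ioi 0, ν {ω | t < W ω} * ENNReal.ofReal (2*t)).toReal
        ≤ (ENNReal.ofReal (δ^2 + (2*δ/c + 2/c^2) + 3/4*π^2*E)).toReal := by
          apply ENNReal.toReal_mono ENNReal.ofReal_ne_top
          rw [← hsum]
          exact hdecomp
      _ = δ^2 + (2*δ/c + 2/c^2) + 3/4*π^2*E := by
          apply ENNReal.toReal_ofReal
          have b1 : (0:ℝ) ≤ 2*δ/c + 2/c^2 := by positivity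
          have b2 : (0:ℝ) ≤ 3/4*π^2*E := by
            apply mul_nonneg _ hE0
            positivity
          nlinarith [sq_nonneg δ]
  have hEeq : Real.exp (-(cZ * n * (π/2 - δ) * δ ^ β)) = E := by
    rw [hE]
    congr 1
    rw [hc]
    ring
  rw [hEeq]
  have hexpand : 2 * (δ + 1/c)^2 = 2*δ^2 + 4*(δ/c) + 2/c^2 := by
    field_simp
    ring
  calc (∫ ω, (leftMost n δ ω + π/2)^2 ∂ν) ≤ δ^2 + (2*δ/c + 2/c^2) + 3/4*π^2*E := hfinal
    _ ≤ 2 * (δ + 1/c)^2 + π^2 * E := by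
        rw [hexpand]
        have h1 : 0 ≤ δ/c := by positivity
        have h2 : 2*δ/c = 2*(δ/c) := by ring
        nlinarith [sq_nonneg δ, sq_nonneg π, mul_nonneg (sq_nonneg π) hE0]
end
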